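/- For any integer C ≥ 2 and any integer i ≥ 1, the number of tuples (a_1,…,a_{i+1}) ∈ {0,1,…,C−1}^{i+1} such that f_i(a_1,…,a_{i+1}) is even lies between (1/3)·C^{i+1} and (2/3)·C^{i+1}. Equivalently, if a_1,…,a_{i+1} are chosen independently and uniformly at random from {0,…,C−1}, then the probability that they ultimately iterate to an even integer is between 1/3 and 2/3. -/
import Mathlib

/-- `iterDiff i a` is the sequence obtained from `a` after `i` iterations of
consecutive differencing: `iterDiff i a r = f_i(a_r, a_{r+1}, …, a_{r+i})`. -/
def iterDiff (i : ℕ) (a : ℕ → ℕ) : ℕ → ℕ :=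
  (fun b n => Nat.dist (b n) (b (n + 1)))^[i] a

/-- Extend a tuple `x ∈ {0,…,C−1}^M` to a sequence `ℕ → ℕ` (by `0` outside). -/
def extend (M C : ℕ) (x : Fin M → Fin C) : ℕ → ℕ :=
  fun n => if h : n < M then (x ⟨n, h⟩ : ℕ) else 0

open Finset


lemma iterDiff_succ (i : ℕ) (a : ℕ → ℕ) (n : ℕ) :
    iterDiff (i + 1) a n = Nat.dist (iterDiff i a n) (iterDiff i a (n + 1)) := by
  simp [iterDiff, Function.iterate_succ_apply']

lemma dist_cast (a b : ℕ) : ((Nat.dist a b : ℕ) : ZMod 2) = (a : ZMod 2) + b := by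
  have key : ∀ x y : ZMod 2, x - y = x + y := by decide
  rcases le_total a b with h | h
  · rw [Nat.dist_eq_sub_of_le h, Nat.cast_sub h, key, add_comm]
  · rw [Nat.dist_eq_sub_of_le_right h, Nat.cast_sub h, key]

lemma iterDiff_congr (i : ℕ) (a b : ℕ → ℕ) :
    ∀ n, (∀ k, n ≤ k → k ≤ n + i → a k = b k) → iterDiff i a n = iterDiff i b n := by
  induction i with
  | zero => intro n h; simpa [iterDiff] using h n le_rfl (by omega)
  | succ i ih =>
    intro n h
    rw [iterDiff_succ, iterDiff_succ, ih n (fun k h1 h2 => h k h1 (by omega)),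
      ih (n+1) (fun k h1 h2 => h k (by omega) (by omega))]

lemma iterDiff_parity (i : ℕ) (a b : ℕ → ℕ) (h : ∀ k, 1 ≤ k → a k = b k) :
    ((iterDiff i a 0 : ℕ) : ZMod 2) + a 0 = (iterDiff i b 0 : ZMod 2) + b 0 := by
  induction i with
  | zero =>
    have : ∀ x : ZMod 2, x + x = 0 := by decide
    simp [iterDiff, this]
  | succ i ih =>
    have h1 : iterDiff i a 1 = iterDiff i b 1 :=
      iterDiff_congr i a b 1 (fun k hk _ => h k hk)
    rw [iterDiff_succ, iterDiff_succ, dist_cast, dist_cast, h1]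
    linear_combination ih

lemma count_mod (C r : ℕ) :
    ((Finset.range C).filter (fun n => n % 2 = r)).card = (C + 1 - r) / 2 ∨ r ≥ 2 := by
  by_cases hr : r < 2
  · left
    induction C with
    | zero => simp; omega
    | succ C ihC =>
      rw [Finset.range_add_one, Finset.filter_insert]
      by_cases h : C % 2 = r
      · rw [if_pos h, Finset.card_insert_of_notMem (by simp), ihC]; omega
      · rw [if_neg h, ihC]; omega
  · right; omega

lemma fin_count (C r : ℕ) (hr : r < 2) :
    (Finset.univ.filter (fun c : Fin C => (c : ℕ) % 2 = r)).card = (C + 1 - r) / 2 := by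
  have := (count_mod C r).resolve_right (by omega)
  rw [← this]
  refine Finset.card_bij (fun c _ => (c : ℕ)) ?_ ?_ ?_
  · intro a ha; simp at ha ⊢; omega
  · intro a _ b _ hab; exact Fin.ext hab
  · intro b hb
    simp only [Finset.mem_filter, Finset.mem_range] at hb
    refine ⟨⟨b, hb.1⟩, ?_, rfl⟩
    simp [hb.2]


lemma even_iff_zmod (n : ℕ) : Even n ↔ (n : ZMod 2) = 0 := by
  rw [even_iff_two_dvd, ← ZMod.natCast_eq_zero_iff]

lemma extend_cons_zero {i C : ℕ} (c : Fin C) (y : Fin i → Fin C) :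
    extend (i + 1) C (Fin.cons c y) 0 = (c : ℕ) := by
  simp [extend, show ((⟨0, Nat.succ_pos i⟩ : Fin (i+1))) = 0 from rfl]

lemma extend_cons_tail {i C : ℕ} (c c' : Fin C) (y : Fin i → Fin C) (k : ℕ) (hk : 1 ≤ k) :
    extend (i + 1) C (Fin.cons c y) k = extend (i + 1) C (Fin.cons c' y) k := by
  unfold extend
  split
  · rename_i h
    have hksub : (⟨k, h⟩ : Fin (i + 1)) = Fin.succ ⟨k - 1, by omega⟩ := by
      apply Fin.ext; simp; omega
    rw [hksub, Fin.cons_succ, Fin.cons_succ]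
  · rfl


/-- For any `C ≥ 2` and `i ≥ 1`, the number of tuples
`(a_1,…,a_{i+1}) ∈ {0,…,C−1}^{i+1}` such that `f_i(a_1,…,a_{i+1})` is even lies
between `(1/3)·C^{i+1}` and `(2/3)·C^{i+1}`. -/
theorem stmt10 (C : ℕ) (hC : 2 ≤ C) (i : ℕ) (hi : 1 ≤ i) :
    (1 / 3 : ℝ) * (C : ℝ) ^ (i + 1) ≤
        (Nat.card {x : Fin (i + 1) → Fin C // Even (iterDiff i (extend (i + 1) C x) 0)} : ℝ) ∧
      (Nat.card {x : Fin (i + 1) → Fin C // Even (iterDiff i (extend (i + 1) C x) 0)} : ℝ) ≤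
        (2 / 3 : ℝ) * (C : ℝ) ^ (i + 1) := by
  classical
  have hC0 : 0 < C := by omega
  set c₀ : Fin C := ⟨0, hC0⟩ with hc₀
  set P : (Fin (i + 1) → Fin C) → Prop :=
    fun x => Even (iterDiff i (extend (i + 1) C x) 0) with hP
  -- parity structure
  set t : (Fin i → Fin C) → ZMod 2 :=
    fun y => ((iterDiff i (extend (i + 1) C (Fin.cons c₀ y)) 0 : ℕ) : ZMod 2) with ht
  have hparity : ∀ (c : Fin C) (y : Fin i → Fin C),
      P (Fin.cons c y) ↔ ((c : ℕ) : ZMod 2) = t y := by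
    intro c y
    have key := iterDiff_parity i (extend (i + 1) C (Fin.cons c y))
      (extend (i + 1) C (Fin.cons c₀ y))
      (fun k hk => extend_cons_tail c c₀ y k hk)
    rw [extend_cons_zero, extend_cons_zero] at key
    have hc₀0 : ((c₀ : ℕ) : ZMod 2) = 0 := by simp [hc₀]
    rw [hc₀0, add_zero] at key
    rw [hP]; simp only []; rw [even_iff_zmod]
    have hcc : ((c : ℕ) : ZMod 2) + ((c : ℕ) : ZMod 2) = 0 := by
      generalize ((c : ℕ) : ZMod 2) = u; revert u; decide
    have hF : ((iterDiff i (extend (i + 1) C (Fin.cons c y)) 0 : ℕ) : ZMod 2)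
        = ((c : ℕ) : ZMod 2) + t y := by
      rw [ht]; linear_combination key - hcc
    rw [hF]
    have hiff : ∀ u v : ZMod 2, (u + v = 0 ↔ u = v) := by decide
    exact hiff _ _
  -- count per tail
  have hcount : ∀ y : Fin i → Fin C,
      C / 2 ≤ (Finset.univ.filter (fun c : Fin C => P (Fin.cons c y))).card ∧
      (Finset.univ.filter (fun c : Fin C => P (Fin.cons c y))).card ≤ (C + 1) / 2 := by
    intro y
    have hset : (Finset.univ.filter (fun c : Fin C => P (Fin.cons c y)))
        = (Finset.univ.filter (fun c : Fin C => (c : ℕ) % 2 = (t y).val)) := by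
      apply Finset.filter_congr
      intro c _
      rw [hparity c y]
      constructor
      · intro h; rw [← h, ZMod.val_natCast]
      · intro h
        apply ZMod.val_injective
        rw [ZMod.val_natCast, h]
    rw [hset, fin_count C (t y).val (ZMod.val_lt _)]
    have := ZMod.val_lt (t y)
    omega
  -- total count
  have hNat : (Nat.card {x : Fin (i + 1) → Fin C // P x})
      = ∑ y : Fin i → Fin C,
          (Finset.univ.filter (fun c : Fin C => P (Fin.cons c y))).card := by
    rw [Nat.card_eq_fintype_card, Fintype.card_subtype]
    rw [Finset.card_filter]
    rw [← Fintype.sum_equiv (Fin.consEquiv (fun _ : Fin (i+1) => Fin C))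
      (fun p => if P (Fin.cons p.1 p.2) then 1 else 0)
      (fun x => if P x then 1 else 0) (fun p => rfl)]
    rw [Fintype.sum_prod_type, Finset.sum_comm]
    congr 1
    ext y
    rw [Finset.card_filter]
  have hcardfun : Fintype.card (Fin i → Fin C) = C ^ i := by simp
  have hlow : C / 2 * C ^ i ≤ Nat.card {x : Fin (i + 1) → Fin C // P x} := by
    rw [hNat]
    calc C / 2 * C ^ i = ∑ _y : Fin i → Fin C, C / 2 := by
          rw [Finset.sum_const, Finset.card_univ, hcardfun, smul_eq_mul, mul_comm]
      _ ≤ _ := Finset.sum_le_sum (fun y _ => (hcount y).1)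
  have hhigh : Nat.card {x : Fin (i + 1) → Fin C // P x} ≤ (C + 1) / 2 * C ^ i := by
    rw [hNat]
    calc ∑ y : Fin i → Fin C,
          (Finset.univ.filter (fun c : Fin C => P (Fin.cons c y))).card
        ≤ ∑ _y : Fin i → Fin C, (C + 1) / 2 :=
          Finset.sum_le_sum (fun y _ => (hcount y).2)
      _ = (C + 1) / 2 * C ^ i := by
          rw [Finset.sum_const, Finset.card_univ, hcardfun, smul_eq_mul, mul_comm]
  -- pass to ℝ
  have h3low : (C : ℝ) ≤ 3 * (↑(C / 2) : ℝ) := by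
    have : C ≤ 3 * (C / 2) := by omega
    exact_mod_cast this
  have h3high : 3 * (↑((C + 1) / 2) : ℝ) ≤ 2 * (C : ℝ) := by
    have : 3 * ((C + 1) / 2) ≤ 2 * C := by omega
    exact_mod_cast this
  have hpow : (0 : ℝ) ≤ (C : ℝ) ^ i := by positivity
  have hlowR : (↑(C / 2 * C ^ i) : ℝ) ≤ Nat.card {x : Fin (i + 1) → Fin C // P x} := by
    exact_mod_cast hlow
  have hhighR : (Nat.card {x : Fin (i + 1) → Fin C // P x} : ℝ) ≤ ↑((C + 1) / 2 * C ^ i) := by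
    exact_mod_cast hhigh
  push_cast at hlowR hhighR
  constructor
  · calc (1 / 3 : ℝ) * (C : ℝ) ^ (i + 1) = ((C : ℝ) / 3) * (C : ℝ) ^ i := by ring
      _ ≤ (↑(C / 2) : ℝ) * (C : ℝ) ^ i := by nlinarith
      _ ≤ _ := hlowR
  · calc (Nat.card {x : Fin (i + 1) → Fin C // P x} : ℝ)
        ≤ (↑((C + 1) / 2) : ℝ) * (C : ℝ) ^ i := hhighR
      _ ≤ (2 * (C : ℝ) / 3) * (C : ℝ) ^ i := by nlinarith
      _ = (2 / 3 : ℝ) * (C : ℝ) ^ (i + 1) := by ring
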